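/- arXiv:2604.23292 — 2 statements merged into one kernel-verified Lean document; each statement's English description precedes it below -/
import Mathlib

section
/- Let ρ ∈ M_n(ℂ) be positive semidefinite, let 𝒜 be a real *-subalgebra of M_n(ℂ), let Π be the orthogonal projection of M_n(ℂ) onto 𝒜 with respect to the real Hilbert–Schmidt inner product, and set ρ₀ := Π(ρ). Then the support of ρ is contained in the support of ρ₀: for every v ∈ ℂⁿ, ρ₀ v = 0 implies ρ v = 0. If, moreover, the orthogonal projection matrix s onto the column space (range) of ρ belongs to 𝒜, then the supports coincide: ρ v = 0 if and only if ρ₀ v = 0. -/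
open Matrix Complex Filter
open scoped ComplexOrder

/-- `Mat n` is the algebra of `n × n` complex matrices. -/
abbrev Mat (n : ℕ) := Matrix (Fin n) (Fin n) ℂ

/-- A real `*`-subalgebra of `M_n(ℂ)`: a real-linear subspace containing the identity,
closed under matrix multiplication and conjugate transpose. -/
def IsRealStarSubalgebra {n : ℕ} (𝒜 : Set (Mat n)) : Prop :=
  (∀ A ∈ 𝒜, ∀ B ∈ 𝒜, A + B ∈ 𝒜) ∧
  (∀ (r : ℝ), ∀ A ∈ 𝒜, r • A ∈ 𝒜) ∧
  (∀ A ∈ 𝒜, ∀ B ∈ 𝒜, A * B ∈ 𝒜) ∧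
  (∀ A ∈ 𝒜, Aᴴ ∈ 𝒜) ∧
  (1 : Mat n) ∈ 𝒜

/-- A real positive map: a real-linear map sending positive semidefinite matrices
to positive semidefinite matrices. -/
def IsRealPositiveMap {n : ℕ} (α : Mat n →ₗ[ℝ] Mat n) : Prop :=
  ∀ B : Mat n, B.PosSemidef → (α B).PosSemidef

/-- A real conditional expectation onto `𝒜`: a real positive map with range in `𝒜`
satisfying the module property `α(AB) = A·α(B)` for `A ∈ 𝒜`. -/
def IsRealCondExp {n : ℕ} (𝒜 : Set (Mat n)) (α : Mat n →ₗ[ℝ] Mat n) : Prop :=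
  IsRealPositiveMap α ∧ (∀ B : Mat n, α B ∈ 𝒜) ∧
  (∀ A ∈ 𝒜, ∀ B : Mat n, α (A * B) = A * α B)

open Polynomial

lemma eq_zero_of_trace_re {n : ℕ} {C : Mat n} (h : ((Cᴴ * C).trace).re = 0) : C = 0 := by
  have hsum : ((Cᴴ * C).trace).re = ∑ j, ∑ i, Complex.normSq (C i j) := by
    rw [Matrix.trace]
    simp only [Matrix.diag, Matrix.mul_apply, Matrix.conjTranspose_apply]
    rw [Complex.re_sum]
    refine Finset.sum_congr rfl fun j _ => ?_
    rw [Complex.re_sum]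
    refine Finset.sum_congr rfl fun i _ => ?_
    simp [Complex.normSq_apply, Complex.mul_re]
  rw [hsum] at h
  have h2 : ∀ j ∈ Finset.univ, ∀ i ∈ (Finset.univ : Finset (Fin n)), Complex.normSq (C i j) = 0 := by
    have := (Finset.sum_eq_zero_iff_of_nonneg (fun j _ => Finset.sum_nonneg
      (fun i _ => Complex.normSq_nonneg _))).mp h
    intro j hj
    exact fun i hi => (Finset.sum_eq_zero_iff_of_nonneg
      (fun i _ => Complex.normSq_nonneg _)).mp (this j hj) i hi
  ext i j
  simpa using Complex.normSq_eq_zero.mp (h2 j (Finset.mem_univ _) i (Finset.mem_univ _))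

open scoped MatrixOrder in
lemma psd_eq_zero_of_trace_re {n : ℕ} {T : Mat n} (hT : T.PosSemidef)
    (h : (T.trace).re = 0) : T = 0 := by
  obtain ⟨B, rfl⟩ := CStarAlgebra.nonneg_iff_eq_star_mul_self.mp hT.nonneg
  rw [eq_zero_of_trace_re (C := B) h]
  simp

lemma aeval_spectral {n : ℕ} {M : Mat n} (hM : M.IsHermitian) (g : ℝ[X]) :
    Polynomial.aeval M g = (hM.eigenvectorUnitary : Mat n) *
      Matrix.diagonal (fun i => ((g.eval (hM.eigenvalues i) : ℝ) : ℂ)) *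
      star (hM.eigenvectorUnitary : Mat n) := by
  set U := (hM.eigenvectorUnitary : Mat n) with hUdef
  have hUU : U * star U = 1 := Matrix.mem_unitaryGroup_iff.mp (hM.eigenvectorUnitary).2
  have hUU' : star U * U = 1 := Matrix.mem_unitaryGroup_iff'.mp (hM.eigenvectorUnitary).2
  have cancel : ∀ X : Mat n, star U * (U * X) = X := by
    intro X; rw [← Matrix.mul_assoc, hUU', Matrix.one_mul]
  have key : ∀ (d e : Fin n → ℂ), (U * Matrix.diagonal d * star U) * (U * Matrix.diagonal e * star U)
      = U * Matrix.diagonal (fun i => d i * e i) * star U := by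
    intro d e
    simp only [Matrix.mul_assoc]
    rw [cancel, ← Matrix.mul_assoc (Matrix.diagonal d), Matrix.diagonal_mul_diagonal]
  have hconj : ∀ (d : Fin n → ℂ) (k : ℕ), (U * Matrix.diagonal d * star U) ^ k =
      U * Matrix.diagonal (fun i => d i ^ k) * star U := by
    intro d k
    induction k with
    | zero =>
      simp only [pow_zero]
      rw [show (Matrix.diagonal fun (i : Fin n) => (1 : ℂ)) = 1 from Matrix.diagonal_one,
        Matrix.mul_one, hUU]
    | succ k ih =>
      rw [pow_succ, ih, key]
      congr 2
  have hpow : ∀ k : ℕ, M ^ k =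
      U * Matrix.diagonal (fun i => ((hM.eigenvalues i : ℝ) : ℂ) ^ k) * star U := by
    intro k
    conv_lhs => rw [show M = U * Matrix.diagonal (fun i => ((hM.eigenvalues i : ℝ) : ℂ)) * star U
      from hM.spectral_theorem]
    exact hconj _ k
  rw [Polynomial.aeval_eq_sum_range (p := g) M]
  have step1 : ∀ k ∈ Finset.range (g.natDegree + 1), g.coeff k • M ^ k =
      U * (g.coeff k • Matrix.diagonal (fun i => ((hM.eigenvalues i : ℝ) : ℂ) ^ k)) * star U := by
    intro k _
    rw [hpow k, mul_smul_comm, smul_mul_assoc]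
  rw [Finset.sum_congr rfl step1, ← Finset.sum_mul, ← Matrix.mul_sum]
  congr 2
  ext i j
  by_cases h : i = j
  · subst h
    simp only [Matrix.sum_apply, Matrix.smul_apply, Matrix.diagonal_apply_eq]
    rw [Polynomial.eval_eq_sum_range]
    push_cast
    refine Finset.sum_congr rfl fun k _ => ?_
    rw [Complex.real_smul]
  · simp [Matrix.sum_apply, Matrix.diagonal_apply_ne _ h]

lemma unitary_conj_mul {n : ℕ} {U : Mat n} (hUU' : star U * U = 1) (d e : Fin n → ℂ) :
    (U * Matrix.diagonal d * star U) * (U * Matrix.diagonal e * star U)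
      = U * Matrix.diagonal (fun i => d i * e i) * star U := by
  have cancel : ∀ X : Mat n, star U * (U * X) = X := by
    intro X; rw [← Matrix.mul_assoc, hUU', Matrix.one_mul]
  simp only [Matrix.mul_assoc]
  rw [cancel, ← Matrix.mul_assoc (Matrix.diagonal d), Matrix.diagonal_mul_diagonal]


/-- Let `ρ` be positive semidefinite, `P` the orthogonal projection onto a
real `*`-subalgebra `𝒜` (w.r.t. the real Hilbert–Schmidt inner product) and `ρ₀ = P ρ`.
Then `supp ρ ≤ supp ρ₀` (i.e. `ker ρ₀ ⊆ ker ρ`); and if the orthogonal projection matrix `s`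
onto the range of `ρ` (the Hermitian idempotent with the same kernel as `ρ`) lies in `𝒜`,
then the supports coincide (`ker ρ = ker ρ₀`). -/
theorem stmt4 {n : ℕ} (ρ : Mat n) (hρ : ρ.PosSemidef)
    (𝒜 : Set (Mat n)) (h𝒜 : IsRealStarSubalgebra 𝒜)
    (P : Mat n →ₗ[ℝ] Mat n)
    (hPmem : ∀ B : Mat n, P B ∈ 𝒜)
    (hPorth : ∀ A ∈ 𝒜, ∀ B : Mat n, ((Aᴴ * (B - P B)).trace).re = 0) :
    (∀ v : Fin n → ℂ, (P ρ).mulVec v = 0 → ρ.mulVec v = 0) ∧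
    (∀ s : Mat n, s.IsHermitian → s * s = s →
      (∀ v : Fin n → ℂ, s.mulVec v = 0 ↔ ρ.mulVec v = 0) → s ∈ 𝒜 →
      ∀ v : Fin n → ℂ, ρ.mulVec v = 0 ↔ (P ρ).mulVec v = 0) := by
  obtain ⟨hadd, hsmul, hmul, hstar, hone⟩ := h𝒜
  have hsub : ∀ A ∈ 𝒜, ∀ B ∈ 𝒜, A - B ∈ 𝒜 := by
    intro A hA B hB
    have := hadd A hA _ (hsmul (-1) B hB)
    simpa [sub_eq_add_neg] using this
  -- uniqueness of the orthogonal projection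
  have uniq : ∀ (B X : Mat n), X ∈ 𝒜 →
      (∀ A ∈ 𝒜, ((Aᴴ * (B - X)).trace).re = 0) → X = P B := by
    intro B X hX horth
    have hC : X - P B ∈ 𝒜 := hsub X hX _ (hPmem B)
    have h1 := hPorth _ hC B
    have h2 := horth _ hC
    have hCC : (X - P B)ᴴ * (X - P B)
        = (X - P B)ᴴ * (B - P B) - (X - P B)ᴴ * (B - X) := by
      rw [← Matrix.mul_sub]
      congr 1
      abel
    have h3 : (((X - P B)ᴴ * (X - P B)).trace).re = 0 := by
      rw [hCC, Matrix.trace_sub, Complex.sub_re, h1, h2, sub_zero]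
    exact sub_eq_zero.mp (eq_zero_of_trace_re h3)
  -- P of a Hermitian matrix is Hermitian
  have hPherm : ∀ B : Mat n, B.IsHermitian → (P B).IsHermitian := by
    intro B hB
    refine uniq B (P B)ᴴ (hstar _ (hPmem B)) ?_
    intro A hA
    have hc : B - (P B)ᴴ = (B - P B)ᴴ := by
      rw [Matrix.conjTranspose_sub, hB.eq]
    rw [hc, ← Matrix.conjTranspose_mul, Matrix.trace_conjTranspose]
    have : (((B - P B) * A).trace).re = 0 := by
      rw [Matrix.trace_mul_comm, ← Matrix.conjTranspose_conjTranspose A]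
      exact hPorth Aᴴ (hstar A hA) B
    simp [Complex.star_def, this]
  -- bimodule property
  have bimod : ∀ A ∈ 𝒜, ∀ C ∈ 𝒜, ∀ B : Mat n, A * P B * C = P (A * B * C) := by
    intro A hA C hC B
    refine uniq _ _ (hmul _ (hmul A hA _ (hPmem B)) C hC) ?_
    intro D hD
    have h1 : Dᴴ * (A * B * C - A * P B * C) = (Dᴴ * A) * (B - P B) * C := by
      noncomm_ring
    have h3 : C * (Dᴴ * A) = (Aᴴ * D * Cᴴ)ᴴ := by
      simp [Matrix.conjTranspose_mul, Matrix.mul_assoc]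
    rw [h1, Matrix.trace_mul_cycle, h3]
    exact hPorth _ (hmul _ (hmul _ (hstar A hA) D hD) _ (hstar C hC)) B
  -- the support projection of ρ₀ := P ρ
  set ρ₀ := P ρ with hρ₀def
  have h₀ : ρ₀.IsHermitian := hPherm ρ hρ.1
  set U := (h₀.eigenvectorUnitary : Mat n) with hUdef
  set eig := h₀.eigenvalues with heigdef
  have hUU : U * star U = 1 := Matrix.mem_unitaryGroup_iff.mp (h₀.eigenvectorUnitary).2
  have hUU' : star U * U = 1 := Matrix.mem_unitaryGroup_iff'.mp (h₀.eigenvectorUnitary).2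
  have hsp : ρ₀ = U * Matrix.diagonal (fun i => ((eig i : ℝ) : ℂ)) * star U :=
    h₀.spectral_theorem
  -- interpolation polynomial
  set nodes : Finset ℝ := insert (0 : ℝ) (Finset.image eig Finset.univ) with hnodes
  set r : ℝ → ℝ := (fun x => if x = 0 then 0 else 1) with hrdef
  set f : Polynomial ℝ := Lagrange.interpolate nodes id r with hfdef
  have heval : ∀ x ∈ nodes, f.eval x = r x := by
    intro x hx
    exact Lagrange.eval_interpolate_at_node r (Set.injOn_id _) hx
  set g : Fin n → ℂ := (fun i => if eig i = 0 then 0 else 1) with hgdef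
  set q := Polynomial.aeval ρ₀ f with hqdef
  have hdg : (fun i => ((Polynomial.eval (eig i) f : ℝ) : ℂ)) = g := by
    funext i
    rw [heval (eig i) (Finset.mem_insert_of_mem (Finset.mem_image_of_mem _ (Finset.mem_univ i)))]
    by_cases h : eig i = 0 <;> simp [hrdef, hgdef, h]
  have hq : q = U * Matrix.diagonal g * star U := by
    rw [hqdef, aeval_spectral h₀ f]
    exact congrArg (fun d => U * Matrix.diagonal d * star U) hdg
  have hqmem : q ∈ 𝒜 := by
    rw [hqdef]
    generalize f = gp
    induction gp using Polynomial.induction_on with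
    | C a => rw [Polynomial.aeval_C, Algebra.algebraMap_eq_smul_one]; exact hsmul a 1 hone
    | add p1 p2 hp1 hp2 => rw [map_add]; exact hadd _ hp1 _ hp2
    | monomial k a ih =>
      have hstep : (Polynomial.aeval ρ₀) (Polynomial.C a * Polynomial.X ^ (k + 1))
          = (Polynomial.aeval ρ₀) (Polynomial.C a * Polynomial.X ^ k) * ρ₀ := by
        simp [_root_.map_mul, map_pow, pow_succ, mul_assoc]
      rw [hstep]
      exact hmul _ ih _ (hPmem ρ)
  have hgstar : star g = g := by
    funext i
    by_cases h : eig i = 0 <;> simp [hgdef, h, Pi.star_apply]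
  have hqherm : qᴴ = q := by
    rw [hq, Matrix.conjTranspose_mul, Matrix.conjTranspose_mul,
      ← Matrix.star_eq_conjTranspose U, ← Matrix.star_eq_conjTranspose (star U), star_star,
      Matrix.diagonal_conjTranspose, hgstar, Matrix.mul_assoc]
  have hgg : (fun i => g i * g i) = g := by
    funext i
    by_cases h : eig i = 0 <;> simp [hgdef, h]
  have hqq : q * q = q := by
    rw [hq, unitary_conj_mul hUU' g g, hgg, ← hq]
  have hqρ : q * ρ₀ = ρ₀ := by
    calc q * ρ₀ = (U * Matrix.diagonal g * star U) *
        (U * Matrix.diagonal (fun i => ((eig i : ℝ) : ℂ)) * star U) := by rw [← hq, ← hsp]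
      _ = U * Matrix.diagonal (fun i => g i * ((eig i : ℝ) : ℂ)) * star U :=
          unitary_conj_mul hUU' _ _
      _ = ρ₀ := by
          have hge : (fun i => g i * ((eig i : ℝ) : ℂ)) = (fun i => ((eig i : ℝ) : ℂ)) := by
            funext i
            by_cases h : eig i = 0 <;> simp [hgdef, h]
          rw [hge, ← hsp]
  -- the complementary projection p
  set p : Mat n := 1 - q with hpdef
  have hpmem : p ∈ 𝒜 := hsub 1 hone q hqmem
  have hpherm : pᴴ = p := by rw [hpdef, Matrix.conjTranspose_sub, Matrix.conjTranspose_one, hqherm]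
  have hpp : p * p = p := by
    rw [hpdef, sub_mul, one_mul, mul_sub, mul_one, hqq]
    abel
  have hpρ₀ : p * ρ₀ = 0 := by
    rw [hpdef, sub_mul, one_mul, hqρ, sub_self]
  -- trace argument : ρ * p = 0
  have htr : ((p * ρ).trace).re = 0 := by
    have h1 := hPorth p hpmem ρ
    rw [hpherm, Matrix.mul_sub, Matrix.trace_sub, ← hρ₀def, hpρ₀, Matrix.trace_zero, sub_zero]
      at h1
    exact h1
  have hT : (pᴴ * ρ * p) = 0 := by
    refine psd_eq_zero_of_trace_re (hρ.conjTranspose_mul_mul_same p) ?_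
    rw [hpherm, Matrix.trace_mul_cycle, hpp]
    exact htr
  open scoped MatrixOrder in
  have hρp : ρ * p = 0 := by
    set S := CFC.sqrt ρ with hSdef
    have hSS : S * S = ρ := CFC.sqrt_mul_sqrt_self ρ hρ.nonneg
    have hSh : Sᴴ = S := (CFC.sqrt_nonneg ρ).posSemidef.1
    have h2 : (S * p)ᴴ * (S * p) = 0 := by
      rw [Matrix.conjTranspose_mul, hSh, ← hT, hpherm]
      rw [← hSS]
      simp [Matrix.mul_assoc]
    have h3 : S * p = 0 := Matrix.conjTranspose_mul_self_eq_zero.mp h2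
    rw [← hSS, Matrix.mul_assoc, h3, Matrix.mul_zero]
  -- part 1
  have part1 : ∀ v : Fin n → ℂ, ρ₀.mulVec v = 0 → ρ.mulVec v = 0 := by
    intro v hv
    have hqv : q.mulVec v = 0 := by
      have hw : (Matrix.diagonal (fun i => ((eig i : ℝ) : ℂ))).mulVec ((star U).mulVec v)
          = 0 := by
        have : ρ₀.mulVec v = U.mulVec ((Matrix.diagonal (fun i => ((eig i : ℝ) : ℂ))).mulVec
            ((star U).mulVec v)) := by
          rw [Matrix.mulVec_mulVec, Matrix.mulVec_mulVec, ← hsp]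
        rw [hv] at this
        have := congrArg ((star U).mulVec) this.symm
        rwa [Matrix.mulVec_mulVec, hUU', Matrix.one_mulVec, Matrix.mulVec_zero] at this
      have hw2 : (Matrix.diagonal g).mulVec ((star U).mulVec v) = 0 := by
        funext i
        have hi := congrFun hw i
        rw [Matrix.mulVec_diagonal] at hi ⊢
        by_cases h : eig i = 0
        · simp [hgdef, h]
        · have : ((star U).mulVec v) i = 0 := by
            by_contra hne
            exact (mul_ne_zero (by exact_mod_cast h) hne) hi
          simp [hgdef, h, this]
      rw [hq, ← Matrix.mulVec_mulVec, ← Matrix.mulVec_mulVec, hw2, Matrix.mulVec_zero]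
    have hpv : p.mulVec v = v := by
      rw [hpdef, Matrix.sub_mulVec, Matrix.one_mulVec, hqv, sub_zero]
    calc ρ.mulVec v = ρ.mulVec (p.mulVec v) := by rw [hpv]
      _ = (ρ * p).mulVec v := Matrix.mulVec_mulVec ..
      _ = 0 := by rw [hρp, Matrix.zero_mulVec]
  refine ⟨part1, ?_⟩
  -- part 2
  intro s hsherm hsidem hker hsmem v
  refine ⟨?_, part1 v⟩
  intro hv
  have hρs : ρ * s = ρ := by
    have hz : ρ * (1 - s) = 0 := by
      ext i j
      have hzz : (ρ * (1 - s)).mulVec (Pi.single j 1) = 0 := by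
        have h4 : s.mulVec ((1 - s).mulVec (Pi.single j 1)) = 0 := by
          rw [Matrix.mulVec_mulVec, Matrix.mul_sub, Matrix.mul_one, hsidem, sub_self,
            Matrix.zero_mulVec]
        have := (hker _).mp h4
        rwa [Matrix.mulVec_mulVec] at this
      have := congrFun hzz i
      simpa [Matrix.mulVec_single] using this
    rw [Matrix.mul_sub, Matrix.mul_one, sub_eq_zero] at hz
    exact hz.symm
  have hsρ : s * ρ = ρ := by
    have := congrArg Matrix.conjTranspose hρs
    rwa [Matrix.conjTranspose_mul, hsherm.eq, hρ.1.eq] at this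
  have hρ₀s : s * ρ₀ * s = ρ₀ := by
    have h5 : s * ρ * s = ρ := by rw [hsρ, hρs]
    calc s * ρ₀ * s = P (s * ρ * s) := bimod s hsmem s hsmem ρ
      _ = ρ₀ := by rw [h5]
  have hsv : s.mulVec v = 0 := (hker v).mpr hv
  calc ρ₀.mulVec v = (s * ρ₀ * s).mulVec v := by rw [hρ₀s]
    _ = 0 := by
        rw [← Matrix.mulVec_mulVec, ← Matrix.mulVec_mulVec, hsv, Matrix.mulVec_zero,
          Matrix.mulVec_zero]
end

section
/- Let 𝒜_J be a real Jordan algebra of Hermitian n×n complex matrices, and let Π_J be the orthogonal projection of the real vector space of Hermitian n×n complex matrices onto 𝒜_J with respect to the inner product ⟨A,B⟩ := Re Tr(A B). Then: (i) Π_J is positive: if B is positive semidefinite then Π_J(B) is positive semidefinite; and (ii) Π_J is faithful: if B is positive semidefinite and Π_J(B) = 0, then B = 0. -/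
open Matrix Complex Filter
open scoped ComplexOrder

/-- A real Jordan algebra of Hermitian matrices: a real-linear subspace of the Hermitian
matrices containing the identity and closed under the Jordan product
`A∘B = (AB + BA)/2`. -/
def IsRealJordanAlgebra {n : ℕ} (𝒜 : Set (Mat n)) : Prop :=
  (∀ A ∈ 𝒜, A.IsHermitian) ∧
  (∀ A ∈ 𝒜, ∀ B ∈ 𝒜, A + B ∈ 𝒜) ∧
  (∀ (r : ℝ), ∀ A ∈ 𝒜, r • A ∈ 𝒜) ∧
  (∀ A ∈ 𝒜, ∀ B ∈ 𝒜, (2⁻¹ : ℂ) • (A * B + B * A) ∈ 𝒜) ∧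
  (1 : Mat n) ∈ 𝒜

section Stmt8Aux
open Polynomial
variable {n : ℕ}

lemma diag_re_nonneg {M : Mat n} (hM : M.PosSemidef) (i : Fin n) : 0 ≤ (M i i).re := by
  have h := hM.diag_nonneg (i := i)
  simpa using (Complex.le_def.mp h).1

lemma trace_re_nonneg {M : Mat n} (hM : M.PosSemidef) : 0 ≤ M.trace.re := by
  rw [Matrix.trace, Complex.re_sum]
  exact Finset.sum_nonneg fun i _ => diag_re_nonneg hM i

lemma trace_mul_re_nonneg {E B : Mat n} (hE : E.PosSemidef) (hB : B.PosSemidef) :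
    0 ≤ ((E * B).trace).re := by
  obtain ⟨C, rfl⟩ : ∃ C : Mat n, E = Cᴴ * C := by
    open scoped MatrixOrder in exact CStarAlgebra.nonneg_iff_eq_star_mul_self.mp hE.nonneg
  rw [mul_assoc, trace_mul_comm]
  exact trace_re_nonneg (by simpa [mul_assoc] using hB.mul_mul_conjTranspose_same C)

lemma psd_trace_zero {B : Mat n} (hB : B.PosSemidef) (h : B.trace.re = 0) : B = 0 := by
  obtain ⟨C, rfl⟩ : ∃ C : Mat n, B = Cᴴ * C := by
    open scoped MatrixOrder in exact CStarAlgebra.nonneg_iff_eq_star_mul_self.mp hB.nonneg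
  suffices hC : C = 0 by simp [hC]
  have key : (Cᴴ * C).trace.re = ∑ i, ∑ j, Complex.normSq (C j i) := by
    rw [Matrix.trace, Complex.re_sum]
    congr 1; ext i
    simp only [Matrix.diag_apply, Matrix.mul_apply, Complex.re_sum, conjTranspose_apply]
    congr 1; ext j
    rw [Complex.normSq_apply]
    simp [Complex.mul_re]
    try ring
  rw [key] at h
  have h1 := (Finset.sum_eq_zero_iff_of_nonneg (fun i _ => Finset.sum_nonneg
    (fun j _ => Complex.normSq_nonneg _))).mp h
  ext j i
  have h2 := (Finset.sum_eq_zero_iff_of_nonneg (fun j _ => Complex.normSq_nonneg _)).mp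
    (h1 i (Finset.mem_univ i)) j (Finset.mem_univ j)
  simpa using Complex.normSq_eq_zero.mp h2

noncomputable def conjAH (U : Mat n) (h1 : U * Uᴴ = 1) (h2 : Uᴴ * U = 1) : Mat n →ₐ[ℝ] Mat n where
  toFun M := U * M * Uᴴ
  map_one' := by show U * 1 * Uᴴ = 1; rw [mul_one, h1]
  map_mul' M N := by
    simp only [mul_assoc]
    rw [show Uᴴ * (U * (N * Uᴴ)) = N * Uᴴ by rw [← mul_assoc, h2, one_mul]]
  map_zero' := by simp
  map_add' M N := by noncomm_ring
  commutes' r := by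
    simp only [Algebra.algebraMap_eq_smul_one]
    rw [mul_smul_comm, mul_one, smul_mul_assoc, h1]

lemma aeval_conj (U D : Mat n) (h1 : U * Uᴴ = 1) (h2 : Uᴴ * U = 1) (p : ℝ[X]) :
    aeval (U * D * Uᴴ) p = U * (aeval D p) * Uᴴ :=
  aeval_algHom_apply (conjAH U h1 h2) D p

lemma aeval_diagonal (d : Fin n → ℂ) (p : ℝ[X]) :
    aeval (Matrix.diagonal d) p = Matrix.diagonal (fun i => aeval (d i) p) := by
  have h := aeval_algHom_apply (Matrix.diagonalAlgHom (n := Fin n) ℝ (α := ℂ)) d p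
  simp only [Matrix.diagonalAlgHom_apply] at h
  rw [h]
  have h2 : (aeval d p : Fin n → ℂ) = fun i => aeval (d i) p :=
    funext fun i => (aeval_algHom_apply (Pi.evalAlgHom ℝ (fun _ : Fin n => ℂ) i) d p).symm
  rw [h2]

lemma aeval_ofReal (x : ℝ) (p : ℝ[X]) : aeval ((x : ℂ)) p = ((p.eval x : ℝ) : ℂ) := by
  have := aeval_algHom_apply Complex.ofRealAm x p
  simpa [Polynomial.aeval_def] using this


lemma jPow_mem {𝒜 : Set (Mat n)} (hJ : IsRealJordanAlgebra 𝒜) {A : Mat n} (hA : A ∈ 𝒜) :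
    ∀ k, A ^ k ∈ 𝒜 := by
  intro k
  induction k with
  | zero => simpa using hJ.2.2.2.2
  | succ k ih =>
    have h := hJ.2.2.2.1 A hA (A ^ k) ih
    have he : (2⁻¹ : ℂ) • (A * A ^ k + A ^ k * A) = A ^ (k + 1) := by
      rw [← pow_succ', ← pow_succ, ← two_smul ℂ (A ^ (k+1)), smul_smul]
      norm_num
    rwa [he] at h

lemma zero_mem' {𝒜 : Set (Mat n)} (hJ : IsRealJordanAlgebra 𝒜) : (0 : Mat n) ∈ 𝒜 := by
  simpa using hJ.2.2.1 0 1 hJ.2.2.2.2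

lemma aeval_mem {𝒜 : Set (Mat n)} (hJ : IsRealJordanAlgebra 𝒜) {A : Mat n} (hA : A ∈ 𝒜)
    (p : ℝ[X]) : aeval A p ∈ 𝒜 := by
  rw [aeval_eq_sum_range]
  apply Finset.sum_induction _ (· ∈ 𝒜) (fun a b ha hb => hJ.2.1 a ha b hb) (zero_mem' hJ)
  exact fun i _ => hJ.2.2.1 _ _ (jPow_mem hJ hA i)

end Stmt8Aux

/-- The orthogonal projection of the real space of Hermitian matrices onto a
real Jordan algebra `𝒜_J`, with respect to the inner product `⟨A,B⟩ = Re Tr(AB)`, is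
positive and faithful. -/
theorem stmt8 {n : ℕ} (𝒜J : Set (Mat n)) (hJ : IsRealJordanAlgebra 𝒜J)
    (P : Mat n →ₗ[ℝ] Mat n)
    (hPmem : ∀ B : Mat n, B.IsHermitian → P B ∈ 𝒜J)
    (hPorth : ∀ A ∈ 𝒜J, ∀ B : Mat n, B.IsHermitian → ((A * (B - P B)).trace).re = 0) :
    (∀ B : Mat n, B.PosSemidef → (P B).PosSemidef) ∧
    (∀ B : Mat n, B.PosSemidef → P B = 0 → B = 0) := by
  constructor
  · intro B hB
    set A := P B with hAdef
    have hAmem : A ∈ 𝒜J := hPmem B hB.isHermitian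
    have hAH : A.IsHermitian := hJ.1 A hAmem
    set U : Mat n := (hAH.eigenvectorUnitary : Mat n) with hUdef
    set lam := hAH.eigenvalues with hlamdef
    have h2 : Uᴴ * U = 1 := by
      rw [← star_eq_conjTranspose]
      exact Unitary.star_mul_self_of_mem (SetLike.coe_mem _)
    have h1 : U * Uᴴ = 1 := by
      rw [← star_eq_conjTranspose]
      exact Unitary.mul_star_self_of_mem (SetLike.coe_mem _)
    have hspec : A = U * Matrix.diagonal (fun i => ((lam i : ℝ) : ℂ)) * Uᴴ := by
      rw [← star_eq_conjTranspose]
      exact hAH.spectral_theorem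
    -- the polynomial interpolating the negative-indicator on eigenvalues
    set f : ℝ → ℝ := fun x => if x < 0 then 1 else 0 with hfdef
    set s : Finset ℝ := Finset.image lam Finset.univ with hsdef
    set p : Polynomial ℝ := Lagrange.interpolate s id f with hpdef
    have hp : ∀ i, Polynomial.eval (lam i) p = f (lam i) := fun i =>
      Lagrange.eval_interpolate_at_node f (Set.injOn_id _)
        (Finset.mem_image_of_mem lam (Finset.mem_univ i))
    set E : Mat n := U * Matrix.diagonal (fun i => ((f (lam i) : ℝ) : ℂ)) * Uᴴ with hEdef
    have hEeq : E = Polynomial.aeval A p := by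
      have hdg : (fun i => Polynomial.aeval ((lam i : ℝ) : ℂ) p) = fun i => ((f (lam i) : ℝ) : ℂ) :=
        funext fun i => by rw [aeval_ofReal, hp i]
      rw [hspec, aeval_conj U _ h1 h2, aeval_diagonal, hdg]
    have hEmem : E ∈ 𝒜J := hEeq ▸ aeval_mem hJ hAmem p
    have hEpsd : E.PosSemidef := by
      apply Matrix.PosSemidef.mul_mul_conjTranspose_same _ U
      apply Matrix.PosSemidef.diagonal
      intro i
      rw [Complex.le_def]
      simp only [hfdef]
      constructor
      · simp only [Complex.zero_re, Complex.ofReal_re]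
        positivity
      · simp
    -- trace of E * A
    have hconjmul : ∀ d e : Fin n → ℂ,
        (U * Matrix.diagonal d * Uᴴ) * (U * Matrix.diagonal e * Uᴴ)
          = U * Matrix.diagonal (fun i => d i * e i) * Uᴴ := by
      intro d e
      rw [← Matrix.diagonal_mul_diagonal]
      simp only [mul_assoc]
      rw [show Uᴴ * (U * (Matrix.diagonal e * Uᴴ)) = Matrix.diagonal e * Uᴴ by
        rw [← mul_assoc, h2, one_mul]]
    have htrconj : ∀ d : Fin n → ℂ, (U * Matrix.diagonal d * Uᴴ).trace = ∑ i, d i := by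
      intro d
      rw [trace_mul_comm, ← mul_assoc, h2, one_mul, Matrix.trace_diagonal]
    have htrEA : ((E * A).trace).re = ∑ i, f (lam i) * lam i := by
      rw [hEdef, hspec, hconjmul, htrconj, Complex.re_sum]
      congr 1; funext i
      simp [← Complex.ofReal_mul]
    -- orthogonality : trace(E * B) = trace(E * A)
    have horth := hPorth E hEmem B hB.isHermitian
    rw [mul_sub, Matrix.trace_sub, Complex.sub_re, sub_eq_zero] at horth
    have hnn : 0 ≤ ((E * A).trace).re := horth ▸ trace_mul_re_nonneg hEpsd hB
    rw [htrEA] at hnn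
    have hterm : ∀ i ∈ Finset.univ, f (lam i) * lam i ≤ (0:ℝ) := by
      intro i _
      by_cases h : lam i < 0
      · simp only [hfdef, if_pos h, one_mul]; linarith
      · simp [hfdef, if_neg h]
    have hz := (Finset.sum_eq_zero_iff_of_nonpos hterm).mp (le_antisymm
      (Finset.sum_nonpos hterm) hnn)
    apply hAH.posSemidef_iff_eigenvalues_nonneg.mpr
    intro i
    by_contra hneg
    push_neg at hneg
    have hneg : lam i < 0 := hneg
    have := hz i (Finset.mem_univ i)
    rw [hfdef] at this
    simp only [if_pos hneg, one_mul] at this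
    exact absurd this (ne_of_lt hneg)
  · intro B hB hPB
    have h := hPorth 1 hJ.2.2.2.2 B hB.isHermitian
    rw [hPB, sub_zero, one_mul] at h
    exact psd_trace_zero hB h
end
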